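/- If σ, τ ∈ S_n satisfy hd(σ,τ) − hd(σ^CT, τ^CT) = 2, then σ⁻¹τ(n-1) ≠ n-1, i.e., the permutation σ⁻¹τ does not fix the symbol n-1. -/

import Mathlib

/-- Hamming distance between two permutations of `Fin n`. -/
def hd {n : ℕ} (σ τ : Equiv.Perm (Fin n)) : ℕ :=
  (Finset.univ.filter fun x => σ x ≠ τ x).card

/-- Contraction of a permutation: delete the symbol `n` (the largest one)
from the cycle decomposition of `σ`. -/
def contract {n : ℕ} (σ : Equiv.Perm (Fin (n + 1))) : Equiv.Perm (Fin n) :=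
  Equiv.removeNone (finSuccEquivLast.permCongr σ)

/-- Extension of a permutation of `Fin n` to a permutation of `Fin (n+1)`
fixing the last symbol. -/
def extendPerm {n : ℕ} (π : Equiv.Perm (Fin n)) : Equiv.Perm (Fin (n + 1)) :=
  finSuccEquivLast.permCongr.symm (Equiv.optionCongr π)

/-- `m`-fold iterated contraction. -/
def contractIter : ∀ (m : ℕ) {n : ℕ}, Equiv.Perm (Fin (n + m)) → Equiv.Perm (Fin n)
  | 0, _, σ => σ
  | m + 1, _, σ => contractIter m (contract σ)

/-- Hamming distance of a permutation array: the minimum Hamming distance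
between distinct elements. -/
noncomputable def hdP {n : ℕ} (P : Set (Equiv.Perm (Fin n))) : ℕ :=
  sInf {d | ∃ σ ∈ P, ∃ τ ∈ P, σ ≠ τ ∧ hd σ τ = d}

lemma permCongr_some {n : ℕ} (σ : Equiv.Perm (Fin (n+1))) (x : Fin n) :
    (finSuccEquivLast.permCongr σ) (some x) = finSuccEquivLast (σ x.castSucc) := by
  simp [Equiv.permCongr_apply]

lemma contract_castSucc_of_ne {n : ℕ} (σ : Equiv.Perm (Fin (n+1))) (x : Fin n)
    (h : σ x.castSucc ≠ Fin.last n) :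
    (contract σ x).castSucc = σ x.castSucc := by
  have h1 : (finSuccEquivLast.permCongr σ) (some x) = some ((σ x.castSucc).castPred h) := by
    rw [permCongr_some]
    conv_lhs => rw [← Fin.castSucc_castPred (σ x.castSucc) h]
    exact finSuccEquivLast_castSucc _
  have h2 := Equiv.removeNone_some _ ⟨_, h1⟩
  rw [h1] at h2
  have : contract σ x = (σ x.castSucc).castPred h := Option.some_injective _ h2
  rw [this, Fin.castSucc_castPred]

lemma contract_castSucc_of_eq {n : ℕ} (σ : Equiv.Perm (Fin (n+1))) (x : Fin n)
    (h : σ x.castSucc = Fin.last n) :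
    (contract σ x).castSucc = σ (Fin.last n) := by
  have hne : σ (Fin.last n) ≠ Fin.last n := by
    intro he
    have := σ.injective (h.trans he.symm)
    exact (Fin.castSucc_lt_last x).ne this
  have h1 : (finSuccEquivLast.permCongr σ) (some x) = none := by
    rw [permCongr_some, h, finSuccEquivLast_last]
  have h2 := Equiv.removeNone_none _ h1
  have h3 : (finSuccEquivLast.permCongr σ) none = some ((σ (Fin.last n)).castPred hne) := by
    have : (finSuccEquivLast.permCongr σ) none = finSuccEquivLast (σ (Fin.last n)) := by
      simp [Equiv.permCongr_apply]
    rw [this]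
    conv_lhs => rw [← Fin.castSucc_castPred (σ (Fin.last n)) hne]
    exact finSuccEquivLast_castSucc _
  rw [h3] at h2
  have : contract σ x = (σ (Fin.last n)).castPred hne := Option.some_injective _ h2
  rw [this, Fin.castSucc_castPred]

lemma hd_contract_eq {n : ℕ} (σ τ : Equiv.Perm (Fin (n+1)))
    (ha : σ⁻¹ (Fin.last n) = τ⁻¹ (Fin.last n)) :
    hd σ τ = hd (contract σ) (contract τ) := by
  classical
  set a := σ⁻¹ (Fin.last n) with ha'
  have hσa : σ a = Fin.last n := σ.apply_symm_apply _
  have hτa : τ a = Fin.last n := by rw [ha]; exact τ.apply_symm_apply _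
  unfold hd
  by_cases hl : a = Fin.last n
  · -- both fix last
    have hσl : σ (Fin.last n) = Fin.last n := by conv_lhs => rw [← hl, hσa]
    have hτl : τ (Fin.last n) = Fin.last n := by conv_lhs => rw [← hl, hτa]
    refine (Finset.card_nbij (i := Fin.castSucc) ?_ ?_ ?_).symm
    · intro y hy
      simp only [Finset.mem_coe, Finset.mem_filter, Finset.mem_univ, true_and] at hy ⊢
      have h1 : σ y.castSucc ≠ Fin.last n := by
        intro he
        have : y.castSucc = a := σ.injective (he.trans hσa.symm)
        rw [this, hl] at he
        exact (Fin.castSucc_lt_last y).ne (this.trans hl)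
      have h2 : τ y.castSucc ≠ Fin.last n := by
        intro he
        have : y.castSucc = a := τ.injective (he.trans hτa.symm)
        exact (Fin.castSucc_lt_last y).ne (this.trans hl)
      rw [← contract_castSucc_of_ne σ y h1, ← contract_castSucc_of_ne τ y h2]
      exact fun he => hy (Fin.castSucc_injective n he)
    · exact fun x _ y _ h => Fin.castSucc_injective n h
    · intro x hx
      simp only [Finset.coe_filter, Set.mem_setOf_eq, Finset.mem_univ, true_and] at hx
      have hxl : x ≠ Fin.last n := by
        intro he; rw [he, hσl, hτl] at hx; exact hx rfl
      refine ⟨x.castPred hxl, ?_, Fin.castSucc_castPred x hxl⟩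
      simp only [Finset.coe_filter, Set.mem_setOf_eq, Finset.mem_univ, true_and]
      have h1 : σ (x.castPred hxl).castSucc ≠ Fin.last n := by
        rw [Fin.castSucc_castPred]
        intro he
        have : x = a := σ.injective (he.trans hσa.symm)
        exact hxl (this.trans hl)
      have h2 : τ (x.castPred hxl).castSucc ≠ Fin.last n := by
        rw [Fin.castSucc_castPred]
        intro he
        have : x = a := τ.injective (he.trans hτa.symm)
        exact hxl (this.trans hl)
      intro he
      have := congrArg Fin.castSucc he
      rw [contract_castSucc_of_ne σ _ h1, contract_castSucc_of_ne τ _ h2,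
        Fin.castSucc_castPred] at this
      exact hx this
  · -- a ≠ last
    set b := a.castPred hl with hb
    have hab : b.castSucc = a := Fin.castSucc_castPred a hl
    have hσl : σ (Fin.last n) ≠ Fin.last n := by
      intro he
      exact hl (σ.injective (hσa.trans he.symm))
    have hτl : τ (Fin.last n) ≠ Fin.last n := by
      intro he
      exact hl (τ.injective (hτa.trans he.symm))
    have hcb_σ : (contract σ b).castSucc = σ (Fin.last n) :=
      contract_castSucc_of_eq σ b (by rw [hab]; exact hσa)
    have hcb_τ : (contract τ b).castSucc = τ (Fin.last n) :=
      contract_castSucc_of_eq τ b (by rw [hab]; exact hτa)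
    refine Finset.card_nbij'
      (i := fun x => if h : x = Fin.last n then b else x.castPred h)
      (j := fun y => if y = b then Fin.last n else y.castSucc) ?_ ?_ ?_ ?_
    · intro x hx
      simp only [Finset.mem_coe, Finset.mem_filter, Finset.mem_univ, true_and] at hx ⊢
      by_cases h : x = Fin.last n
      · rw [dif_pos h]
        intro he
        have := congrArg Fin.castSucc he
        rw [hcb_σ, hcb_τ] at this
        rw [h] at hx
        exact hx this
      · rw [dif_neg h]
        have hxa : x ≠ a := by
          intro he; rw [he, hσa, hτa] at hx; exact hx rfl
        have h1 : σ (x.castPred h).castSucc ≠ Fin.last n := by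
          rw [Fin.castSucc_castPred]
          intro he
          exact hxa (σ.injective (he.trans hσa.symm))
        have h2 : τ (x.castPred h).castSucc ≠ Fin.last n := by
          rw [Fin.castSucc_castPred]
          intro he
          exact hxa (τ.injective (he.trans hτa.symm))
        intro he
        have := congrArg Fin.castSucc he
        rw [contract_castSucc_of_ne σ _ h1, contract_castSucc_of_ne τ _ h2,
          Fin.castSucc_castPred] at this
        exact hx this
    · intro y hy
      simp only [Finset.mem_coe, Finset.mem_filter, Finset.mem_univ, true_and] at hy ⊢
      by_cases h : y = b
      · rw [if_pos h]
        intro he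
        apply hy
        rw [h]
        apply Fin.castSucc_injective
        rw [hcb_σ, hcb_τ, he]
      · rw [if_neg h]
        have hya : y.castSucc ≠ a := by
          intro he; exact h (Fin.castSucc_injective n (he.trans hab.symm))
        have h1 : σ y.castSucc ≠ Fin.last n := by
          intro he; exact hya (σ.injective (he.trans hσa.symm))
        have h2 : τ y.castSucc ≠ Fin.last n := by
          intro he; exact hya (τ.injective (he.trans hτa.symm))
        rw [← contract_castSucc_of_ne σ y h1, ← contract_castSucc_of_ne τ y h2]
        exact fun he => hy (Fin.castSucc_injective n he)
    · intro x hx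
      simp only [Finset.mem_coe, Finset.mem_filter, Finset.mem_univ, true_and] at hx
      dsimp only
      by_cases h : x = Fin.last n
      · rw [dif_pos h, if_pos rfl, h]
      · rw [dif_neg h]
        have hxa : x ≠ a := by
          intro he; rw [he, hσa, hτa] at hx; exact hx rfl
        have : x.castPred h ≠ b := by
          intro he
          apply hxa
          rw [← Fin.castSucc_castPred x h, he, hab]
        rw [if_neg this, Fin.castSucc_castPred]
    · intro y hy
      dsimp only
      by_cases h : y = b
      · rw [if_pos h, dif_pos rfl, h]
      · rw [if_neg h, dif_neg (Fin.castSucc_lt_last y).ne, Fin.castPred_castSucc]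

theorem ne_last_of_hd_sub_eq_two (n : ℕ) (σ τ : Equiv.Perm (Fin (n + 1)))
    (h : (hd σ τ : ℤ) - (hd (contract σ) (contract τ) : ℤ) = 2) :
    (τ * σ⁻¹) (Fin.last n) ≠ Fin.last n := by
  intro hc
  have hc' : τ (σ⁻¹ (Fin.last n)) = Fin.last n := hc
  have ha : σ⁻¹ (Fin.last n) = τ⁻¹ (Fin.last n) :=
    τ.injective (by rw [hc']; exact (τ.apply_symm_apply _).symm)
  have := hd_contract_eq σ τ ha
  omega
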